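/- Let n ≥ 1 and k ≥ 0, let f be holomorphic on {t ∈ ℂⁿ : t_i ≠ 0 for all i} × ℂᵏ, and let ℓ⃗ = (ℓ₁, …, ℓₙ) ∈ ℤⁿ. Then the function (t, w) ↦ t₁^{−ℓ₁}⋯tₙ^{−ℓₙ} f(t, w) extends holomorphically to ℂⁿ × ℂᵏ if and only if, for every j ∈ {1, …, n}, the function (t, w) ↦ t_j^{−ℓ_j} f(t, w) extends holomorphically to {t ∈ ℂⁿ : t_i ≠ 0 for all i ≠ j} × ℂᵏ. -/

import Mathlib

open Set Metric Complex intervalIntegral MeasureTheory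
open scoped NNReal ENNReal

set_option maxHeartbeats 1000000

noncomputable section


/-- zpow is analytic away from 0. -/
lemma analyticAt_zpow' {z : ℂ} (hz : z ≠ 0) (m : ℤ) :
    AnalyticAt ℂ (fun w : ℂ => w ^ m) z := by
  cases m with
  | ofNat m => simpa using (analyticAt_id (𝕜 := ℂ) (z := z)).fun_pow m
  | negSucc m =>
      have : (fun w : ℂ => w ^ (Int.negSucc m)) = fun w : ℂ => (w ^ (m + 1))⁻¹ := by
        funext w; rw [zpow_negSucc]
      rw [this]
      exact ((analyticAt_id (𝕜 := ℂ) (z := z)).pow (m + 1)).inv (pow_ne_zero _ hz)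

/-- `m ^ m ≤ e ^ m * m !`. -/
lemma pow_self_le_exp_mul_factorial (m : ℕ) :
    (m : ℝ) ^ m ≤ Real.exp 1 ^ m * (m.factorial : ℝ) := by
  induction m with
  | zero => simp
  | succ m ih =>
      have h1 : ((m + 1 : ℕ) : ℝ) ^ m ≤ Real.exp 1 * (m : ℝ) ^ m := by
        rcases Nat.eq_zero_or_pos m with rfl | hm
        · norm_num
        · have hmpos : (0:ℝ) < m := by exact_mod_cast hm
          have : ((m + 1 : ℕ) : ℝ) ^ m = ((1 + 1 / m) * m) ^ m := by
            congr 1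
            push_cast; field_simp
          rw [this, mul_pow]
          have h2 : (1 + 1 / (m:ℝ)) ^ m ≤ Real.exp 1 := by
            have : (1 + 1 / (m:ℝ)) ≤ Real.exp (1 / m) := by
              rw [add_comm]
              exact Real.add_one_le_exp _
            calc (1 + 1 / (m:ℝ)) ^ m ≤ Real.exp (1/m) ^ m := by
                  apply pow_le_pow_left₀ (by positivity) this
              _ = Real.exp ((1/m) * m) := by
                  rw [← Real.exp_nat_mul]; ring_nf
              _ = Real.exp 1 := by
                  congr 1; field_simp
            
          exact mul_le_mul_of_nonneg_right h2 (by positivity)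
      calc ((m + 1 : ℕ) : ℝ) ^ (m + 1) = ((m+1:ℕ):ℝ) ^ m * ((m+1:ℕ):ℝ) := by ring
        _ ≤ (Real.exp 1 * (m:ℝ)^m) * ((m+1:ℕ):ℝ) := by
            apply mul_le_mul_of_nonneg_right h1 (by positivity)
        _ ≤ (Real.exp 1 * (Real.exp 1 ^ m * m.factorial)) * ((m+1:ℕ):ℝ) := by
            apply mul_le_mul_of_nonneg_right (mul_le_mul_of_nonneg_left ih (Real.exp_pos 1).le)
              (by positivity)
        _ = Real.exp 1 ^ (m+1) * ((m+1).factorial : ℝ) := by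
            rw [Nat.factorial_succ]
            push_cast
            ring

/-- The set of points of `ℂⁿ × ℂᵏ` where certain first coordinates are nonzero is preconnected. -/
lemma isPreconnected_coords {n k : ℕ} (P : Fin n → Prop) [DecidablePred P] :
    IsPreconnected {p : (Fin n → ℂ) × (Fin k → ℂ) | ∀ i, P i → p.1 i ≠ 0} := by
  have : {p : (Fin n → ℂ) × (Fin k → ℂ) | ∀ i, P i → p.1 i ≠ 0} =
      (Set.pi Set.univ (fun i => if P i then {(0:ℂ)}ᶜ else Set.univ)) ×ˢ
        (Set.univ : Set (Fin k → ℂ)) := by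
    ext p
    simp only [Set.mem_setOf_eq, Set.mem_prod, Set.mem_pi, Set.mem_univ, true_and, true_implies,
      and_true]
    constructor
    · intro h i; by_cases hP : P i <;> simp [hP, h i]
    · intro h i hP; have := h i; simpa [hP] using this
  rw [this]
  apply IsPreconnected.prod _ isPreconnected_univ
  apply isPreconnected_univ_pi
  intro i
  by_cases hP : P i <;> simp only [hP, if_true, if_false]
  · have : 1 < Module.rank ℝ ℂ := by
      rw [Complex.rank_real_complex]
      norm_num
    have h2 := isPathConnected_compl_singleton_of_one_lt_rank this (0:ℂ)
    simpa using h2.isConnected.isPreconnected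
  · exact isPreconnected_univ



variable {E : Type*} [NormedAddCommGroup E] [NormedSpace ℂ E]

/-- Chain rule for iterated derivatives of an analytic function along a line. -/
lemma hasDerivAt_iteratedFDeriv_line {h : E → ℂ} {U : Set E} (hU : IsOpen U)
    (hh : AnalyticOnNhd ℂ h U) (m : ℕ) (a w : E) {τ : ℂ} (hτ : a + τ • w ∈ U)
    (v : Fin m → E) :
    HasDerivAt (fun σ : ℂ => iteratedFDeriv ℂ m h (a + σ • w) v)
      (iteratedFDeriv ℂ (m + 1) h (a + τ • w) (Fin.cons w v)) τ := by
  have hΦ : AnalyticOnNhd ℂ (iteratedFDeriv ℂ m h) U := hh.iteratedFDeriv m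
  have hdiff : DifferentiableAt ℂ (iteratedFDeriv ℂ m h) (a + τ • w) :=
    (hΦ _ hτ).differentiableAt
  have hline : HasDerivAt (fun σ : ℂ => a + σ • w) w τ := by
    simpa using ((hasDerivAt_id τ).smul_const w).const_add a
  have hcomp : HasDerivAt (fun σ : ℂ => iteratedFDeriv ℂ m h (a + σ • w))
      (fderiv ℂ (iteratedFDeriv ℂ m h) (a + τ • w) w) τ :=
    hdiff.hasFDerivAt.comp_hasDerivAt τ hline
  have happ := (ContinuousMultilinearMap.apply ℂ (fun _ : Fin m => E) ℂ
      v).hasFDerivAt.comp_hasDerivAt τ hcomp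
  have : iteratedFDeriv ℂ (m + 1) h (a + τ • w) (Fin.cons w v) =
      (ContinuousMultilinearMap.apply ℂ (fun _ : Fin m => E) ℂ v)
        (fderiv ℂ (iteratedFDeriv ℂ m h) (a + τ • w) w) := by
    rw [iteratedFDeriv_succ_apply_left]
    simp [Fin.tail_cons]
  rw [this]
  exact happ

/-- Iterated derivatives along a line are evaluations of the full iterated derivative. -/
lemma iteratedDeriv_line {h : E → ℂ} {U : Set E} (hU : IsOpen U)
    (hh : AnalyticOnNhd ℂ h U) (m : ℕ) (a w : E) {τ : ℂ} (hτ : a + τ • w ∈ U) :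
    iteratedDeriv m (fun σ : ℂ => h (a + σ • w)) τ =
      iteratedFDeriv ℂ m h (a + τ • w) (fun _ => w) := by
  induction m generalizing τ with
  | zero => simp
  | succ m ih =>
      rw [iteratedDeriv_succ]
      have hev : (fun σ : ℂ => iteratedDeriv m (fun σ' : ℂ => h (a + σ' • w)) σ) =ᶠ[nhds τ]
          (fun σ : ℂ => iteratedFDeriv ℂ m h (a + σ • w) (fun _ => w)) := by
        have hopen : IsOpen {σ : ℂ | a + σ • w ∈ U} :=
          hU.preimage (by continuity)
        filter_upwards [hopen.mem_nhds hτ] with σ hσ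
        exact ih hσ
      rw [hev.deriv_eq]
      have := (hasDerivAt_iteratedFDeriv_line hU hh m a w hτ (fun _ => w)).deriv
      rw [this]
      congr 1
      funext i
      refine Fin.cases ?_ ?_ i <;> simp

/-- Cauchy estimate for iterated directional derivatives of an analytic function. -/
lemma norm_iteratedFDeriv_le_of_analytic {h : E → ℂ} {U : Set E} (hU : IsOpen U)
    (hh : AnalyticOnNhd ℂ h U) {s : ℝ} (hs : 0 < s) {M : ℝ} :
    ∀ (m : ℕ) (q : E), closedBall q (m * s) ⊆ U →
      (∀ q' ∈ closedBall q (m * s), ‖h q'‖ ≤ M) →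
      ∀ v : Fin m → E, ‖iteratedFDeriv ℂ m h q v‖ ≤ M / s ^ m * ∏ i, ‖v i‖ := by
  intro m
  induction m with
  | zero =>
      intro q hq hM v
      have hqU : q ∈ closedBall q ((0:ℕ) * s) := by simp
      simpa using hM q hqU
  | succ m ih =>
      intro q hq hM v
      rw [Nat.cast_succ] at hq hM
      have hM0 : 0 ≤ M := le_trans (norm_nonneg _)
        (hM q (by simp [mul_nonneg (by positivity : (0:ℝ) ≤ ((m:ℝ)+1)) hs.le,
          mul_nonneg (Nat.cast_nonneg (m+1)) hs.le]))
      set w := v 0 with hw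
      rcases eq_or_ne w 0 with hw0 | hw0
      · have : iteratedFDeriv ℂ (m + 1) h q v = 0 := by
          rw [← Fin.cons_self_tail v, iteratedFDeriv_succ_apply_left]
          rw [Fin.cons_zero, ← hw, hw0]
          simp
        rw [this]
        have : ∏ i, ‖v i‖ = 0 := by
          apply Finset.prod_eq_zero (Finset.mem_univ 0)
          rw [← hw, hw0, norm_zero]
        rw [this]
        simp [norm_nonneg]
      · -- main case
        have hqU : q ∈ U := hq (by simp [mul_nonneg (by positivity : (0:ℝ) ≤ ((m:ℝ)+1)) hs.le,
          mul_nonneg (Nat.cast_nonneg (m+1)) hs.le])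
        have hwpos : 0 < ‖w‖ := norm_pos_iff.mpr hw0
        set s' := s / ‖w‖ with hs'
        have hs'pos : 0 < s' := div_pos hs hwpos
        set ψ : ℂ → ℂ := fun τ => iteratedFDeriv ℂ m h (q + τ • w) (Fin.tail v) with hψ
        -- points on the closed disc map into good balls
        have key : ∀ τ : ℂ, ‖τ‖ ≤ s' → closedBall (q + τ • w) (m * s) ⊆ U ∧ q + τ • w ∈ U := by
          intro τ hτ
          have hdist : dist (q + τ • w) q ≤ s := by
            rw [dist_eq_norm]
            simp only [add_sub_cancel_left, norm_smul]
            calc ‖τ‖ * ‖w‖ ≤ s' * ‖w‖ := by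
                  exact mul_le_mul_of_nonneg_right hτ hwpos.le
              _ = s := by rw [hs', div_mul_cancel₀ s hwpos.ne']
          have hsub : closedBall (q + τ • w) (m * s) ⊆ closedBall q ((m + 1) * s) := by
            intro x hx
            have := dist_triangle x (q + τ • w) q
            simp only [mem_closedBall] at hx ⊢
            calc dist x q ≤ dist x (q + τ • w) + dist (q + τ • w) q := this
              _ ≤ m * s + s := add_le_add hx hdist
              _ = (↑m + 1) * s := by ring
          constructor
          · exact hsub.trans hq
          · apply hq
            simp only [mem_closedBall]
            calc dist (q + τ • w) q ≤ s := hdist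
              _ ≤ (↑m + 1) * s := by nlinarith [hs.le]
        have hψdiff : ∀ τ : ℂ, ‖τ‖ ≤ s' → DifferentiableAt ℂ ψ τ := by
          intro τ hτ
          have hU' := (key τ hτ).2
          exact (hasDerivAt_iteratedFDeriv_line hU hh m q w hU' (Fin.tail v)).differentiableAt
        have hdc : DiffContOnCl ℂ ψ (ball 0 s') := by
          constructor
          · intro τ hτ
            exact (hψdiff τ (le_of_lt (by simpa using hτ))).differentiableWithinAt
          · rw [closure_ball 0 hs'pos.ne']
            intro τ hτ
            exact (hψdiff τ (by simpa using hτ)).continuousAt.continuousWithinAt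
        have hbound : ∀ τ ∈ sphere (0:ℂ) s', ‖ψ τ‖ ≤ M / s ^ m * ∏ i, ‖Fin.tail v i‖ := by
          intro τ hτ
          have hτ' : ‖τ‖ ≤ s' := by
            simp only [mem_sphere_iff_norm, sub_zero] at hτ
            exact hτ.le
          obtain ⟨h1, _⟩ := key τ hτ'
          refine ih (q + τ • w) h1 ?_ (Fin.tail v)
          intro q' hq'
          apply hM
          have hdist : dist (q + τ • w) q ≤ s := by
            rw [dist_eq_norm]
            simp only [add_sub_cancel_left, norm_smul]
            calc ‖τ‖ * ‖w‖ ≤ s' * ‖w‖ := mul_le_mul_of_nonneg_right hτ' hwpos.le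
              _ = s := by rw [hs', div_mul_cancel₀ s hwpos.ne']
          simp only [mem_closedBall] at hq' ⊢
          calc dist q' q ≤ dist q' (q + τ • w) + dist (q + τ • w) q := dist_triangle _ _ _
            _ ≤ m * s + s := add_le_add hq' hdist
            _ = (↑m + 1) * s := by ring
        have hderiv := Complex.norm_deriv_le_of_forall_mem_sphere_norm_le hs'pos hdc hbound
        -- identify deriv ψ 0 with the iterated derivative
        have h0 : q + (0:ℂ) • w ∈ U := by simpa using hqU
        have hd0 : deriv ψ 0 = iteratedFDeriv ℂ (m + 1) h q (Fin.cons w (Fin.tail v)) := by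
          have := (hasDerivAt_iteratedFDeriv_line hU hh m q w h0 (Fin.tail v)).deriv
          rw [hψ]
          rw [this]
          congr 1 <;> simp
        rw [Fin.cons_self_tail v] at hd0
        rw [← hd0]
        calc ‖deriv ψ 0‖ ≤ (M / s ^ m * ∏ i, ‖Fin.tail v i‖) / s' := hderiv
          _ = M / s ^ (m + 1) * ∏ i, ‖v i‖ := by
            rw [← Fin.cons_self_tail v]
            rw [Fin.prod_univ_succ]
            simp only [Fin.cons_zero, Fin.tail_cons, Fin.cons_succ]
            rw [hs']
            field_simp
            ring



variable {E : Type*} [NormedAddCommGroup E] [NormedSpace ℂ E]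



lemma cmm_intervalIntegral_apply {m : ℕ}
    {J : ℝ → ContinuousMultilinearMap ℂ (fun _ : Fin m => E) ℂ}
    {a b : ℝ} (hJ : IntervalIntegrable J MeasureTheory.volume a b) (v : Fin m → E) :
    (∫ θ in a..b, J θ) v = ∫ θ in a..b, (J θ) v := by
  simp_rw [intervalIntegral_eq_integral_uIoc, ← ContinuousMultilinearMap.integral_apply hJ.def' v,
    ContinuousMultilinearMap.smul_apply]

/-- Analytic dependence of a circle integral on a Banach-space parameter. -/
lemma analyticAt_circleIntegral_param [FiniteDimensional ℂ E]
    {h : ℂ × E → ℂ} {U : Set (ℂ × E)} (hU : IsOpen U) (hh : AnalyticOnNhd ℂ h U)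
    {R r : ℝ} (hR : 0 < R) (hr : 0 < r) {x₀ : E}
    (hsub : (sphere (0:ℂ) R) ×ˢ (closedBall x₀ r) ⊆ U) :
    AnalyticAt ℂ (fun x => ∮ u in C((0:ℂ), R), h (u, x)) x₀ := by
  classical
  -- compactness set-up
  have hK : IsCompact ((sphere (0:ℂ) R) ×ˢ (closedBall x₀ r)) :=
    (isCompact_sphere _ _).prod (isCompact_closedBall _ _)
  obtain ⟨δ, hδpos, hδ⟩ := hK.exists_cthickening_subset_open hU hsub
  set K₂ := Metric.cthickening δ ((sphere (0:ℂ) R) ×ˢ (closedBall x₀ r)) with hK₂def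
  have hK₂ : IsCompact K₂ := hK.cthickening
  have hcont : ContinuousOn h K₂ := (hh.mono hδ).continuousOn
  obtain ⟨M, hM⟩ := hK₂.exists_bound_of_continuousOn hcont
  have hKne : ((R:ℂ), x₀) ∈ (sphere (0:ℂ) R) ×ˢ (closedBall x₀ r) := by
    constructor
    · simp [abs_of_pos hR]
    · simp [hr.le]
  have hM0 : 0 ≤ M :=
    le_trans (norm_nonneg _) (hM _ (Metric.self_subset_cthickening _ hKne))
  set γ := circleMap (0:ℂ) R with hγ
  have hγmem : ∀ θ : ℝ, (γ θ, x₀) ∈ (sphere (0:ℂ) R) ×ˢ (closedBall x₀ r) := fun θ =>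
    ⟨circleMap_mem_sphere _ hR.le _, by simp [hr.le]⟩
  -- iterated partial derivatives in the parameter
  set H : (m : ℕ) → (ℂ × E) → ContinuousMultilinearMap ℂ (fun _ : Fin m => E) ℂ :=
    fun m q => ContinuousMultilinearMap.compContinuousLinearMapL
      (fun _ : Fin m => ContinuousLinearMap.inr ℂ ℂ E) (iteratedFDeriv ℂ m h q) with hH
  have hHcont : ∀ m, ContinuousOn (H m) U := fun m =>
    (ContinuousMultilinearMap.compContinuousLinearMapL _).continuous.comp_continuousOn
      (hh.iteratedFDeriv m).continuousOn
  -- uniform bounds on the derivatives along the circle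
  have hHbound : ∀ (m : ℕ) (θ : ℝ) (v : Fin m → E),
      ‖H m (γ θ, x₀) v‖ ≤ M * (m / δ) ^ m * ∏ i, ‖v i‖ := by
    intro m θ v
    have hq : (γ θ, x₀) ∈ (sphere (0:ℂ) R) ×ˢ (closedBall x₀ r) := hγmem θ
    have hball : closedBall ((γ θ, x₀) : ℂ × E) δ ⊆ K₂ :=
      closedBall_subset_cthickening hq _
    have hballU : closedBall ((γ θ, x₀) : ℂ × E) δ ⊆ U := hball.trans hδ
    have hMball : ∀ q' ∈ closedBall ((γ θ, x₀) : ℂ × E) δ, ‖h q'‖ ≤ M := fun q' hq' =>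
      hM q' (hball hq')
    rcases Nat.eq_zero_or_pos m with rfl | hm
    · have hqU : ((γ θ, x₀) : ℂ × E) ∈ K₂ := Metric.self_subset_cthickening _ hq
      have h1 : H 0 (γ θ, x₀) v = h (γ θ, x₀) := by
        rw [hH]
        simp [ContinuousMultilinearMap.compContinuousLinearMapL_apply,
          ContinuousMultilinearMap.compContinuousLinearMap_apply]
      rw [h1]
      simpa using hM _ hqU
    · set s := δ / m with hs
      have hspos : 0 < s := div_pos hδpos (by exact_mod_cast hm)
      have hms : (m : ℝ) * s = δ := by
        rw [hs]; field_simp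
      have key := norm_iteratedFDeriv_le_of_analytic hU hh hspos m ((γ θ, x₀) : ℂ × E)
        (by rw [hms]; exact hballU) (by rw [hms]; exact hMball) (fun i => ((0:ℂ), v i))
      have h1 : H m (γ θ, x₀) v = iteratedFDeriv ℂ m h (γ θ, x₀) (fun i => ((0:ℂ), v i)) := by
        rw [hH]
        simp [ContinuousMultilinearMap.compContinuousLinearMapL_apply,
          ContinuousMultilinearMap.compContinuousLinearMap_apply]
      have h2 : (∏ i, ‖(((0 : ℂ), v i) : ℂ × E)‖) = ∏ i, ‖v i‖ := by
        apply Finset.prod_congr rfl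
        intro i _
        simp [Prod.norm_def]
      rw [h1]
      refine le_trans key (le_of_eq ?_)
      rw [h2, hs]
      have hmne : ((m:ℝ)) ≠ 0 := by exact_mod_cast hm.ne'
      have hδne : δ ≠ 0 := hδpos.ne'
      rw [div_pow, div_pow]
      field_simp
  -- handy reformulation of H applied to vectors
  have hHapp : ∀ (m : ℕ) (q : ℂ × E) (v : Fin m → E),
      H m q v = iteratedFDeriv ℂ m h q (fun i => ((0:ℂ), v i)) := by
    intro m q v
    rw [hH]
    simp [ContinuousMultilinearMap.compContinuousLinearMapL_apply,
      ContinuousMultilinearMap.compContinuousLinearMap_apply]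
  -- continuity of the integrands
  have hγcont : Continuous γ := continuous_circleMap 0 R
  have hγmemU : ∀ θ : ℝ, ((γ θ, x₀) : ℂ × E) ∈ U := fun θ =>
    hδ (Metric.self_subset_cthickening _ (hγmem θ))
  have hHγcont : ∀ m : ℕ, Continuous (fun θ : ℝ => H m (γ θ, x₀)) := fun m =>
    (hHcont m).comp_continuous (hγcont.prodMk continuous_const) hγmemU
  have hderivγ : (fun θ : ℝ => deriv γ θ) = fun θ : ℝ => γ θ * I := by
    funext θ; exact deriv_circleMap 0 R θ
  have hderivγcont : Continuous (fun θ : ℝ => deriv γ θ) := by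
    rw [hderivγ]; exact hγcont.mul continuous_const
  have hnormderivγ : ∀ θ : ℝ, ‖deriv γ θ‖ = R := by
    intro θ
    rw [deriv_circleMap]
    simp only [norm_mul, norm_circleMap_zero, Complex.norm_I, mul_one,
      abs_of_pos hR]
  -- the candidate power series
  set P : FormalMultilinearSeries ℂ E ℂ := fun m =>
    ((m.factorial : ℂ))⁻¹ • ∫ θ in (0:ℝ)..(2*Real.pi), deriv γ θ • H m (γ θ, x₀) with hP
  have hInt : ∀ m : ℕ, IntervalIntegrable (fun θ : ℝ => deriv γ θ • H m (γ θ, x₀))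
      MeasureTheory.volume 0 (2*Real.pi) :=
    fun m => (hderivγcont.smul (hHγcont m)).intervalIntegrable _ _
  -- norm of the CMM along the circle
  have hHnorm : ∀ (m : ℕ) (θ : ℝ), ‖H m (γ θ, x₀)‖ ≤ M * ((m:ℝ) / δ) ^ m := by
    intro m θ
    exact ContinuousMultilinearMap.opNorm_le_bound (by positivity) (hHbound m θ)
  -- bound on the coefficients
  have hPbound : ∀ m : ℕ, ‖P m‖ ≤ 2 * Real.pi * R * M * ((m:ℝ)/δ)^m / m.factorial := by
    intro m
    simp only [hP]
    refine le_trans (ContinuousMultilinearMap.opNorm_smul_le _ _) ?_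
    have h1 : ‖((m.factorial : ℂ))⁻¹‖ = ((m.factorial : ℝ))⁻¹ := by
      rw [norm_inv]
      norm_num
    rw [h1]
    have h2 : ‖∫ θ in (0:ℝ)..(2*Real.pi), deriv γ θ • H m (γ θ, x₀)‖ ≤
        (R * (M * ((m:ℝ)/δ)^m)) * |2*Real.pi - 0| := by
      apply intervalIntegral.norm_integral_le_of_norm_le_const
      intro θ _
      refine le_trans (ContinuousMultilinearMap.opNorm_smul_le _ _) ?_
      rw [hnormderivγ]
      exact mul_le_mul_of_nonneg_left (hHnorm m θ) hR.le
    calc ((m.factorial : ℝ))⁻¹ * ‖∫ θ in (0:ℝ)..(2*Real.pi), deriv γ θ • H m (γ θ, x₀)‖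
        ≤ ((m.factorial : ℝ))⁻¹ * ((R * (M * ((m:ℝ)/δ)^m)) * |2*Real.pi - 0|) := by
          exact mul_le_mul_of_nonneg_left h2 (inv_nonneg.mpr (Nat.cast_nonneg _))
      _ = 2 * Real.pi * R * M * ((m:ℝ)/δ)^m / m.factorial := by
          rw [abs_of_pos (by norm_num [Real.pi_pos] : (0:ℝ) < 2*Real.pi - 0)]
          have : (m.factorial : ℝ) ≠ 0 := by exact_mod_cast m.factorial_ne_zero
          field_simp
          ring
  -- key numeric bound
  have hnum : ∀ m : ℕ, ((m:ℝ)/δ)^m / m.factorial ≤ (Real.exp 1 / δ)^m := by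
    intro m
    have hfac : (0:ℝ) < m.factorial := by exact_mod_cast m.factorial_pos
    have hδm : (0:ℝ) < δ ^ m := by positivity
    rw [div_pow, div_pow, div_div, div_le_div_iff₀ (by positivity) hδm]
    calc (m:ℝ)^m * δ^m ≤ (Real.exp 1 ^ m * m.factorial) * δ^m := by
          apply mul_le_mul_of_nonneg_right (pow_self_le_exp_mul_factorial m) (by positivity)
      _ = Real.exp 1 ^ m * (δ ^ m * ↑m.factorial) := by ring

  -- radius bound
  set ρ : ℝ := δ / (2 * Real.exp 1) with hρ
  have hρpos : 0 < ρ := by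
    apply div_pos hδpos
    positivity
  have hradius : ENNReal.ofReal ρ ≤ P.radius := by
    have : ENNReal.ofReal ρ = ((ρ.toNNReal : ℝ≥0) : ℝ≥0∞) := by
      rw [ENNReal.ofReal]
    rw [this]
    apply P.le_radius_of_bound (2 * Real.pi * R * M)
    intro m
    have hcoe : ((ρ.toNNReal : ℝ≥0) : ℝ) = ρ := Real.coe_toNNReal _ hρpos.le
    rw [hcoe]
    calc ‖P m‖ * ρ ^ m ≤ (2 * Real.pi * R * M * ((m:ℝ)/δ)^m / m.factorial) * ρ ^ m := by
          apply mul_le_mul_of_nonneg_right (hPbound m) (by positivity)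
      _ = (2 * Real.pi * R * M) * (((m:ℝ)/δ)^m / m.factorial * ρ ^ m) := by ring
      _ ≤ (2 * Real.pi * R * M) * ((Real.exp 1 / δ)^m * ρ ^ m) := by
          apply mul_le_mul_of_nonneg_left _ (by positivity)
          apply mul_le_mul_of_nonneg_right (hnum m) (by positivity)
      _ = (2 * Real.pi * R * M) * (1/2 : ℝ) ^ m := by
          congr 1
          rw [← mul_pow]
          congr 1
          rw [hρ]
          have h1 : Real.exp 1 ≠ 0 := (Real.exp_pos 1).ne'
          field_simp
      _ ≤ (2 * Real.pi * R * M) * 1 := by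
          apply mul_le_mul_of_nonneg_left _ (by positivity)
          apply pow_le_one₀ (by norm_num) (by norm_num)
      _ = 2 * Real.pi * R * M := by ring
  -- assemble the power series
  set ε : ℝ := min ρ (r/2) with hε
  have hεpos : 0 < ε := lt_min hρpos (by positivity)
  have hball : HasFPowerSeriesOnBall (fun x => ∮ u in C((0:ℂ), R), h (u, x)) P x₀
      (ENNReal.ofReal ε) := by
    refine ⟨le_trans (ENNReal.ofReal_le_ofReal (min_le_left _ _)) hradius, by
      simp [hεpos], ?_⟩
    intro y hy
    have hynorm : ‖y‖ < ε := by
      rwa [EMetric.mem_ball, edist_zero_right, ← ofReal_norm_eq_enorm,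
        ENNReal.ofReal_lt_ofReal_iff hεpos] at hy
    -- identify the terms with interval integrals
    have hPapply : ∀ m : ℕ, (P m fun _ => y) =
        ∫ θ in (0:ℝ)..(2*Real.pi),
          ((m.factorial : ℂ))⁻¹ • (deriv γ θ • (H m (γ θ, x₀) fun _ => y)) := by
      intro m
      rw [hP]
      simp only [ContinuousMultilinearMap.smul_apply]
      rw [cmm_intervalIntegral_apply (hInt m), ← intervalIntegral.integral_smul]
      simp only [ContinuousMultilinearMap.smul_apply]
    -- the sum of the integrands
    have hsum_integrand : ∀ θ : ℝ, HasSum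
        (fun m : ℕ => ((m.factorial : ℂ))⁻¹ • (deriv γ θ • (H m (γ θ, x₀) fun _ => y)))
        (deriv γ θ • h (γ θ, x₀ + y)) := by
      intro θ
      rcases eq_or_ne y 0 with rfl | hy0
      · have h0 : ∀ (m : ℕ), m ≠ 0 →
            ((m.factorial : ℂ))⁻¹ • (deriv γ θ • (H m (γ θ, x₀) fun _ => (0:E))) = 0 := by
          intro m hm
          obtain ⟨m', rfl⟩ := Nat.exists_eq_succ_of_ne_zero hm
          rw [ContinuousMultilinearMap.map_coord_zero _ (0 : Fin (m'+1)) rfl]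
          simp
        have hs := hasSum_single
          (f := fun m : ℕ => ((m.factorial : ℂ))⁻¹ •
            (deriv γ θ • (H m (γ θ, x₀) fun _ => (0:E)))) 0 h0
        convert hs using 1
        simp [hHapp]
      · -- Taylor series along the segment
        set w : ℂ × E := ((0:ℂ), y) with hwdef
        have hwnorm : ‖w‖ = ‖y‖ := by simp [hwdef, Prod.norm_def]
        set g₁ : ℂ → ℂ := fun τ => h ((γ θ, x₀) + τ • w) with hg₁
        have hpt : ∀ τ : ℂ, ((γ θ, x₀) : ℂ × E) + τ • w = ((γ θ, x₀ + τ • y) : ℂ × E) := by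
          intro τ
          rw [hwdef]
          ext
          · simp
          · simp
        have hballsub : ∀ τ : ℂ, τ ∈ ball (0:ℂ) (r / ‖y‖) → ((γ θ, x₀) + τ • w) ∈ U := by
          intro τ hτ
          have hmem : x₀ + τ • y ∈ closedBall x₀ r := by
            simp only [mem_closedBall, dist_self_add_left, norm_smul]
            calc ‖τ‖ * ‖y‖ ≤ (r / ‖y‖) * ‖y‖ := by
                  apply mul_le_mul_of_nonneg_right (le_of_lt (by simpa using hτ))
                    (norm_nonneg y)
              _ = r := div_mul_cancel₀ r (norm_ne_zero_iff.mpr hy0)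
          rw [hpt τ]
          exact hδ (Metric.self_subset_cthickening _
            ⟨circleMap_mem_sphere _ hR.le _, hmem⟩)
        have hg₁diff : DifferentiableOn ℂ g₁ (ball (0:ℂ) (r / ‖y‖)) := by
          intro τ hτ
          have hlineD : DifferentiableAt ℂ (fun σ : ℂ => ((γ θ, x₀) : ℂ × E) + σ • w) τ :=
            (differentiableAt_id.smul_const w).const_add _
          have hhd : DifferentiableAt ℂ h (((γ θ, x₀) : ℂ × E) + τ • w) :=
            (hh _ (hballsub τ hτ)).differentiableAt
          exact (hhd.comp τ hlineD).differentiableWithinAt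
        have h1mem : (1:ℂ) ∈ ball (0:ℂ) (r / ‖y‖) := by
          simp only [mem_ball, dist_zero_right, norm_one]
          rw [lt_div_iff₀ (norm_pos_iff.mpr hy0)]
          rw [one_mul]
          calc ‖y‖ < ε := hynorm
            _ ≤ r/2 := min_le_right _ _
            _ < r := by linarith
        have htaylor := Complex.hasSum_taylorSeries_on_ball hg₁diff h1mem
        -- identify iterated derivatives
        have hiter : ∀ m : ℕ, iteratedDeriv m g₁ 0 = (H m (γ θ, x₀) fun _ => y) := by
          intro m
          rw [hHapp]
          have h0U : ((γ θ, x₀) : ℂ × E) + (0:ℂ) • w ∈ U := by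
            simpa using hγmemU θ
          have := iteratedDeriv_line hU hh m ((γ θ, x₀) : ℂ × E) w h0U
          rw [hg₁]
          rw [this]
          simp [hwdef]
        have hg₁1 : g₁ 1 = h (γ θ, x₀ + y) := by
          rw [hg₁]
          congr 1
          rw [hwdef]
          simp [Prod.ext_iff]
        rw [← hg₁1]
        have : (fun m : ℕ => ((m.factorial : ℂ))⁻¹ •
            (deriv γ θ • (H m (γ θ, x₀) fun _ => y))) =
            fun m : ℕ => deriv γ θ • (((m.factorial : ℂ))⁻¹ • ((1:ℂ) - 0) ^ m •
              iteratedDeriv m g₁ 0) := by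
          funext m
          rw [hiter m]
          rw [smul_comm]
          congr 1
          simp
        rw [this]
        exact htaylor.const_smul _
    -- integrability of each term
    have hcontm : ∀ m : ℕ, Continuous
        (fun θ : ℝ => ((m.factorial : ℂ))⁻¹ • (deriv γ θ • (H m (γ θ, x₀) fun _ => y))) := by
      intro m
      apply Continuous.fun_const_smul
      apply hderivγcont.smul
      exact (ContinuousMultilinearMap.apply ℂ (fun _ : Fin m => E) ℂ
        (fun _ => y)).continuous.comp (hHγcont m)
    set q : ℝ := Real.exp 1 * ‖y‖ / δ with hq
    have hq0 : 0 ≤ q := by positivity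
    have hq1 : q < 1 := by
      rw [hq]
      have h1 : ‖y‖ < δ / (2 * Real.exp 1) := lt_of_lt_of_le hynorm
        ((min_le_left _ _).trans (le_of_eq hρ.symm) |>.trans (le_refl _))
      rw [div_lt_one hδpos]
      have := mul_lt_mul_of_pos_left h1 (Real.exp_pos 1)
      calc Real.exp 1 * ‖y‖ < Real.exp 1 * (δ / (2 * Real.exp 1)) := this
        _ = δ / 2 := by
            field_simp
        _ < δ := by linarith
    have hbound : ∀ (m : ℕ) (θ : ℝ),
        ‖((m.factorial : ℂ))⁻¹ • (deriv γ θ • (H m (γ θ, x₀) fun _ => y))‖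
          ≤ R * M * q ^ m := by
      intro m θ
      rw [norm_smul, norm_smul, hnormderivγ]
      have h1 : ‖((m.factorial : ℂ))⁻¹‖ = ((m.factorial : ℝ))⁻¹ := by
        rw [norm_inv]; norm_num
      rw [h1]
      have h2 : ‖H m (γ θ, x₀) fun _ => y‖ ≤ M * ((m:ℝ)/δ)^m * ‖y‖^m := by
        have := hHbound m θ (fun _ => y)
        simpa [Finset.prod_const, Finset.card_univ] using this
      have hfac : (0:ℝ) < (m.factorial : ℝ) := by exact_mod_cast m.factorial_pos
      calc ((m.factorial : ℝ))⁻¹ * (R * ‖H m (γ θ, x₀) fun _ => y‖)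
          ≤ ((m.factorial : ℝ))⁻¹ * (R * (M * ((m:ℝ)/δ)^m * ‖y‖^m)) := by
            apply mul_le_mul_of_nonneg_left _ (inv_nonneg.mpr hfac.le)
            exact mul_le_mul_of_nonneg_left h2 hR.le
        _ = R * M * (((m:ℝ)/δ)^m / m.factorial * ‖y‖^m) := by
            field_simp
        _ ≤ R * M * ((Real.exp 1 / δ)^m * ‖y‖^m) := by
            apply mul_le_mul_of_nonneg_left _ (by positivity)
            exact mul_le_mul_of_nonneg_right (hnum m) (by positivity)
        _ = R * M * q ^ m := by
            rw [hq, ← mul_pow]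
            congr 2
            field_simp
    have hsummable : Summable (fun m : ℕ => R * M * q ^ m) :=
      (summable_geometric_of_lt_one hq0 hq1).mul_left _
    have key := intervalIntegral.hasSum_integral_of_dominated_convergence
      (μ := MeasureTheory.volume) (a := (0:ℝ)) (b := 2*Real.pi)
      (F := fun (m : ℕ) (θ : ℝ) =>
        ((m.factorial : ℂ))⁻¹ • (deriv γ θ • (H m (γ θ, x₀) fun _ => y)))
      (f := fun θ : ℝ => deriv γ θ • h (γ θ, x₀ + y))
      (bound := fun (m : ℕ) (_ : ℝ) => R * M * q ^ m)
      (fun m => ((hcontm m).aestronglyMeasurable))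
      (fun m => MeasureTheory.ae_of_all _ fun θ _ => hbound m θ)
      (MeasureTheory.ae_of_all _ fun θ _ => hsummable)
      (intervalIntegrable_const)
      (MeasureTheory.ae_of_all _ fun θ _ => hsum_integrand θ)
    simp only [← hPapply] at key
    have hfinal : (∫ θ in (0:ℝ)..(2*Real.pi), deriv γ θ • h (γ θ, x₀ + y)) =
        ∮ u in C((0:ℂ), R), h (u, x₀ + y) := by
      simp only [circleIntegral, hγ]
    rw [hfinal] at key
    exact key
  exact hball.analyticAt



variable {n k : ℕ}

local notation "X" => (Fin n → ℂ) × (Fin k → ℂ)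



/-- The continuous linear map `(u, p) ↦ (update p.1 j u, p.2)`. -/
def updCLM (n k : ℕ) (j : Fin n) :
    ℂ × ((Fin n → ℂ) × (Fin k → ℂ)) →L[ℂ] (Fin n → ℂ) × (Fin k → ℂ) :=
  let fstC : ℂ × ((Fin n → ℂ) × (Fin k → ℂ)) →L[ℂ] ℂ := ContinuousLinearMap.fst ℂ _ _
  let sndX : ℂ × ((Fin n → ℂ) × (Fin k → ℂ)) →L[ℂ] (Fin n → ℂ) × (Fin k → ℂ) :=
    ContinuousLinearMap.snd ℂ _ _
  let coordT : (Fin n → ℂ) × (Fin k → ℂ) →L[ℂ] (Fin n → ℂ) := ContinuousLinearMap.fst ℂ _ _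
  let coordW : (Fin n → ℂ) × (Fin k → ℂ) →L[ℂ] (Fin k → ℂ) := ContinuousLinearMap.snd ℂ _ _
  let evalj : (Fin n → ℂ) →L[ℂ] ℂ := ContinuousLinearMap.proj j
  let c : ℂ × ((Fin n → ℂ) × (Fin k → ℂ)) →L[ℂ] ℂ :=
    fstC - (evalj.comp (coordT.comp sndX))
  (((coordT.comp sndX) + c.smulRight (Pi.single j 1)).prod (coordW.comp sndX))

lemma updCLM_apply (j : Fin n) (u : ℂ) (p : X) :
    updCLM n k j (u, p) = (Function.update p.1 j u, p.2) := by
  unfold updCLM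
  ext i
  · simp only [ContinuousLinearMap.prod_apply, ContinuousLinearMap.add_apply,
      ContinuousLinearMap.coe_comp', Function.comp_apply,
      ContinuousLinearMap.smulRight_apply, ContinuousLinearMap.sub_apply,
      ContinuousLinearMap.coe_fst', ContinuousLinearMap.coe_snd',
      ContinuousLinearMap.proj_apply, Pi.add_apply, Pi.smul_apply, smul_eq_mul]
    rcases eq_or_ne i j with rfl | hij
    · simp [Function.update_self]
    · simp [Function.update_of_ne hij, Pi.single_eq_of_ne hij]
  · simp

lemma updCLM_self (j : Fin n) (p : X) : updCLM n k j (p.1 j, p) = p := by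
  rw [updCLM_apply]
  rw [Function.update_eq_self]

lemma isOpen_coords (P : Fin n → Prop) [DecidablePred P] :
    IsOpen {p : X | ∀ i, P i → p.1 i ≠ 0} := by
  have : {p : X | ∀ i, P i → p.1 i ≠ 0} = ⋂ i, {p : X | P i → p.1 i ≠ 0} := by
    ext p; simp
  rw [this]
  apply isOpen_iInter_of_finite
  intro i
  by_cases hP : P i
  · simp only [hP, true_implies]
    exact isOpen_compl_singleton.preimage ((continuous_apply i).comp continuous_fst)
  · simp [hP]

lemma isOpen_coordj_ne (j : Fin n) : IsOpen {p : X | p.1 j ≠ 0} :=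
  isOpen_compl_singleton.preimage ((continuous_apply j).comp continuous_fst)

/-- Core extension lemma: a function analytic away from `{t_j = 0}` (relative to the region
where the `S`-coordinates are nonzero), that is analytic across `{t_j = 0}` on the locus where
all other coordinates are nonzero, extends analytically across `{t_j = 0}`. -/
lemma core_extension (j : Fin n) (S : Fin n → Prop) [DecidablePred S] (hjS : ¬ S j)
    {g : X → ℂ}
    (hg : AnalyticOnNhd ℂ g (({p : X | ∀ i, S i → p.1 i ≠ 0} ∩ {p : X | p.1 j ≠ 0}) ∪
      {p : X | ∀ i, i ≠ j → p.1 i ≠ 0})) :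
    ∃ G : X → ℂ, AnalyticOnNhd ℂ G {p : X | ∀ i, S i → p.1 i ≠ 0} ∧
      EqOn G g ({p : X | ∀ i, S i → p.1 i ≠ 0} ∩ {p : X | p.1 j ≠ 0}) := by
  classical
  set Ω : Set X := {p : X | ∀ i, S i → p.1 i ≠ 0} with hΩ
  set Uj : Set X := {p : X | ∀ i, i ≠ j → p.1 i ≠ 0} with hUj
  set W : Set X := (Ω ∩ {p : X | p.1 j ≠ 0}) ∪ Uj with hW
  set L := updCLM n k j with hL
  set h : ℂ × X → ℂ := fun q => (q.1 - q.2.1 j)⁻¹ • g (L q) with hh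
  -- the set where h is analytic
  set Uh : Set (ℂ × X) := {q : ℂ × X | q.1 ≠ q.2.1 j ∧ q.1 ≠ 0 ∧ q.2 ∈ Ω} with hUh
  have hUhopen : IsOpen Uh := by
    apply IsOpen.inter
    · exact isOpen_ne_fun continuous_fst ((continuous_apply j).comp
        (continuous_fst.comp continuous_snd))
    · apply IsOpen.inter
      · exact isOpen_compl_singleton.preimage continuous_fst
      · exact (isOpen_coords S).preimage continuous_snd
  have hmemW : ∀ q : ℂ × X, q ∈ Uh → L q ∈ W := by
    intro q hq
    obtain ⟨hq1, hq2, hq3⟩ := hq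
    left
    have hq' : L q = (Function.update q.2.1 j q.1, q.2.2) := by
      rw [hL, ← updCLM_apply j q.1 q.2]
    constructor
    · intro i hSi
      rw [hq']
      have hij : i ≠ j := fun hij => hjS (hij ▸ hSi)
      simp only [Function.update_of_ne hij]
      exact hq3 i hSi
    · rw [hq']
      simpa using hq2
  have hhana : AnalyticOnNhd ℂ h Uh := by
    intro q hq
    obtain ⟨hq1, hq2, hq3⟩ := hq
    apply AnalyticAt.fun_smul
    · apply AnalyticAt.fun_inv
      · exact (ContinuousLinearMap.fst ℂ ℂ X -
          (ContinuousLinearMap.proj j).comp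
            ((ContinuousLinearMap.fst ℂ (Fin n → ℂ) (Fin k → ℂ)).comp
              (ContinuousLinearMap.snd ℂ ℂ X))).analyticAt q
      · simpa using sub_ne_zero_of_ne hq1
    · exact (hg _ (hmemW q ⟨hq1, hq2, hq3⟩)).comp ((updCLM n k j).analyticAt q)
  -- the Cauchy transforms
  set GR : ℝ → X → ℂ := fun R p => (2 * Real.pi * I : ℂ)⁻¹ • ∮ u in C((0:ℂ), R), h (u, p)
    with hGR
  have habscont : Continuous fun p : X => ‖p.1 j‖ :=
    continuous_norm.comp ((continuous_apply j).comp continuous_fst)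
  have hopenR : ∀ R : ℝ, IsOpen (Ω ∩ {p : X | ‖p.1 j‖ < R}) := fun R =>
    (isOpen_coords S).inter (isOpen_lt habscont continuous_const)
  -- Step 1: analyticity of the Cauchy transform with fixed radius
  have step1 : ∀ R : ℝ, 0 < R →
      AnalyticOnNhd ℂ (GR R) (Ω ∩ {p : X | ‖p.1 j‖ < R}) := by
    intro R hR p₀ hp₀
    obtain ⟨ε, hεpos, hεsub⟩ := Metric.nhds_basis_closedBall.mem_iff.mp
      ((hopenR R).mem_nhds hp₀)
    have hsub : (sphere (0:ℂ) R) ×ˢ (closedBall p₀ ε) ⊆ Uh := by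
      rintro ⟨u, p⟩ ⟨hu, hp⟩
      have hp' := hεsub hp
      have huabs : ‖u‖ = R := by
        simpa using hu
      refine ⟨?_, ?_, hp'.1⟩
      · show u ≠ p.1 j
        intro huv
        rw [huv] at huabs
        exact absurd (huabs ▸ hp'.2) (lt_irrefl R)
      · show u ≠ 0
        intro hu0
        rw [hu0] at huabs
        simp at huabs
        exact hR.ne' huabs.symm
    have happ := analyticAt_circleIntegral_param hUhopen hhana hR hεpos hsub
    exact analyticAt_const.fun_smul happ
  -- Step 2: Cauchy formula where all other coordinates are nonzero
  have step2 : ∀ (R : ℝ), 0 < R → ∀ p : X, p ∈ Uj → ‖p.1 j‖ < R →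
      GR R p = g p := by
    intro R hR p hpU hpR
    have hφ : ∀ u : ℂ, AnalyticAt ℂ (fun u' : ℂ => g (L (u', p))) u := by
      intro u
      have hmem : L (u, p) ∈ W := by
        right
        rw [hL, updCLM_apply]
        intro i hij
        simp only [Function.update_of_ne hij]
        exact hpU i hij
      have hpair : AnalyticAt ℂ (fun u' : ℂ => ((u', p) : ℂ × X)) u :=
        AnalyticAt.prod analyticAt_id analyticAt_const
      have hLin : AnalyticAt ℂ (fun u' : ℂ => L (u', p)) u :=
        AnalyticAt.comp (f := fun u' : ℂ => ((u', p) : ℂ × X))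
          ((updCLM n k j).analyticAt _) hpair
      exact AnalyticAt.comp (f := fun u' : ℂ => L (u', p)) (hg _ hmem) hLin
    have key := Complex.two_pi_I_inv_smul_circleIntegral_sub_inv_smul_of_differentiable_on_off_countable
      (f := fun u : ℂ => g (L (u, p))) (c := (0:ℂ)) (R := R) (s := ∅) countable_empty
      (by simpa using hpR)
      (fun u _ => (hφ u).continuousAt.continuousWithinAt)
      (fun u hu => (hφ u).differentiableAt)
    have hinteq : (∮ u in C((0:ℂ), R), h (u, p)) =
        ∮ u in C((0:ℂ), R), (u - p.1 j)⁻¹ • g (L (u, p)) := rfl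
    show (2 * Real.pi * I : ℂ)⁻¹ • (∮ u in C((0:ℂ), R), h (u, p)) = g p
    rw [hinteq, key]
    show g (L (p.1 j, p)) = g p
    rw [hL, updCLM_self]
  -- basic facts about the sets
  have hUjopen : IsOpen Uj := isOpen_coords (fun i => i ≠ j)
  have hUjsubΩ : Uj ⊆ Ω := fun p hp i hSi => hp i (fun hij => hjS (hij ▸ hSi))
  have hpOneU : ((fun _ => 1, fun _ => 0) : X) ∈ Uj := by
    intro i _
    simp
  -- membership of the twisted points
  have hLmem : ∀ (z : ℂ) (p : X), p ∈ Ω → (L (z, p)).1 j = z ∧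
      (L (z, p) ∈ Ω) ∧ (p ∈ Uj → L (z, p) ∈ Uj) := by
    intro z p hp
    have hq' : L (z, p) = (Function.update p.1 j z, p.2) := by
      rw [hL, ← updCLM_apply j z p]
    refine ⟨by rw [hq']; simp, ?_, ?_⟩
    · intro i hSi
      have hij : i ≠ j := fun hij => hjS (hij ▸ hSi)
      rw [hq']
      simp only [Function.update_of_ne hij]
      exact hp i hSi
    · intro hpU i hij
      rw [hq']
      simp only [Function.update_of_ne hij]
      exact hpU i hij
  have hιana : ∀ (z : ℂ) (q : X), AnalyticAt ℂ (fun p : X => L (z, p)) q := by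
    intro z q
    have hpair : AnalyticAt ℂ (fun p : X => ((z, p) : ℂ × X)) q :=
      AnalyticAt.prod analyticAt_const analyticAt_id
    exact AnalyticAt.comp (f := fun p : X => ((z, p) : ℂ × X))
      ((updCLM n k j).analyticAt _) hpair
  -- Step 3: independence of the radius
  have step3 : ∀ (z : ℂ) (R₁ R₂ : ℝ), 0 < R₁ → 0 < R₂ → ‖z‖ < R₁ →
      ‖z‖ < R₂ → ∀ p ∈ Ω, GR R₁ (L (z, p)) = GR R₂ (L (z, p)) := by
    intro z R₁ R₂ h1 h2 hz1 hz2
    have hA : AnalyticOnNhd ℂ (fun p => GR R₁ (L (z, p))) Ω := by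
      intro q hq
      obtain ⟨hc1, hc2, _⟩ := hLmem z q hq
      exact AnalyticAt.comp (f := fun p : X => L (z, p))
        ((step1 R₁ h1) _ ⟨hc2, by rw [mem_setOf_eq, hc1]; exact hz1⟩) (hιana z q)
    have hB : AnalyticOnNhd ℂ (fun p => GR R₂ (L (z, p))) Ω := by
      intro q hq
      obtain ⟨hc1, hc2, _⟩ := hLmem z q hq
      exact AnalyticAt.comp (f := fun p : X => L (z, p))
        ((step1 R₂ h2) _ ⟨hc2, by rw [mem_setOf_eq, hc1]; exact hz2⟩) (hιana z q)
    have heq : EqOn (fun p => GR R₁ (L (z, p))) (fun p => GR R₂ (L (z, p))) Uj := by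
      intro p hp
      obtain ⟨hc1, hc2, hc3⟩ := hLmem z p (hUjsubΩ hp)
      have hLU := hc3 hp
      simp only
      rw [step2 R₁ h1 _ hLU (by rw [hc1]; exact hz1),
        step2 R₂ h2 _ hLU (by rw [hc1]; exact hz2)]
    intro p hp
    exact AnalyticOnNhd.eqOn_of_preconnected_of_eventuallyEq hA hB
      (isPreconnected_coords S) (hUjsubΩ hpOneU)
      (heq.eventuallyEq_of_mem (hUjopen.mem_nhds hpOneU)) hp
  -- Step 3': the transform agrees with g where t_j ≠ 0
  have step3' : ∀ (z : ℂ) (R : ℝ), 0 < R → z ≠ 0 → ‖z‖ < R →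
      ∀ p ∈ Ω, GR R (L (z, p)) = g (L (z, p)) := by
    intro z R hR hz0 hzR
    have hA : AnalyticOnNhd ℂ (fun p => GR R (L (z, p))) Ω := by
      intro q hq
      obtain ⟨hc1, hc2, _⟩ := hLmem z q hq
      exact AnalyticAt.comp (f := fun p : X => L (z, p))
        ((step1 R hR) _ ⟨hc2, by rw [mem_setOf_eq, hc1]; exact hzR⟩) (hιana z q)
    have hB : AnalyticOnNhd ℂ (fun p => g (L (z, p))) Ω := by
      intro q hq
      obtain ⟨hc1, hc2, _⟩ := hLmem z q hq
      have hmem : L (z, q) ∈ W := Or.inl ⟨hc2, by rw [mem_setOf_eq, hc1]; exact hz0⟩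
      exact AnalyticAt.comp (f := fun p : X => L (z, p)) (hg _ hmem) (hιana z q)
    have heq : EqOn (fun p => GR R (L (z, p))) (fun p => g (L (z, p))) Uj := by
      intro p hp
      obtain ⟨hc1, hc2, hc3⟩ := hLmem z p (hUjsubΩ hp)
      simp only
      rw [step2 R hR _ (hc3 hp) (by rw [hc1]; exact hzR)]
    intro p hp
    exact AnalyticOnNhd.eqOn_of_preconnected_of_eventuallyEq hA hB
      (isPreconnected_coords S) (hUjsubΩ hpOneU)
      (heq.eventuallyEq_of_mem (hUjopen.mem_nhds hpOneU)) hp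
  -- assemble the global extension
  refine ⟨fun p => GR (‖p.1 j‖ + 1) p, ?_, ?_⟩
  · intro p₀ hp₀
    set R₀ : ℝ := ‖p₀.1 j‖ + 1 with hR₀def
    have hR₀ : 0 < R₀ := by positivity
    have hmem₀ : p₀ ∈ Ω ∩ {p : X | ‖p.1 j‖ < R₀} :=
      ⟨hp₀, by rw [mem_setOf_eq, hR₀def]; linarith⟩
    apply AnalyticAt.congr ((step1 R₀ hR₀) _ hmem₀)
    filter_upwards [(hopenR R₀).mem_nhds hmem₀] with p hp
    have h3 := step3 (p.1 j) R₀ (‖p.1 j‖ + 1) hR₀ (by positivity) hp.2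
      (by linarith) p hp.1
    rw [hL, updCLM_self] at h3
    exact h3
  · intro p hp
    obtain ⟨hpΩ, hpj⟩ := hp
    have h3 := step3' (p.1 j) (‖p.1 j‖ + 1) (by positivity) hpj (by linarith)
      p hpΩ
    rw [hL, updCLM_self] at h3
    exact h3






lemma prod_univ_eq (A : Set (Fin n → ℂ)) :
    (A ×ˢ (univ : Set (Fin k → ℂ))) = {p : X | p.1 ∈ A} := by
  ext p; simp

lemma analyticAt_coord_zpow (i : Fin n) (m : ℤ) {p : X} (hp : p.1 i ≠ 0) :
    AnalyticAt ℂ (fun q : X => q.1 i ^ m) p := by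
  have hc : AnalyticAt ℂ (fun q : X => q.1 i) p :=
    ((ContinuousLinearMap.proj (R := ℂ) (φ := fun _ : Fin n => ℂ) i).comp
      (ContinuousLinearMap.fst ℂ (Fin n → ℂ) (Fin k → ℂ))).analyticAt p
  exact AnalyticAt.comp (f := fun q : X => q.1 i) (analyticAt_zpow' hp m) hc

lemma analyticAt_prod_zpow (T : Finset (Fin n)) (l : Fin n → ℤ) {p : X}
    (hp : ∀ i ∈ T, p.1 i ≠ 0) :
    AnalyticAt ℂ (fun q : X => ∏ i ∈ T, q.1 i ^ (l i)) p := by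
  exact Finset.analyticAt_fun_prod (f := fun i : Fin n => fun q : X => q.1 i ^ (l i)) T
    (fun i hi => analyticAt_coord_zpow i (l i) (hp i hi))

/-- Proposition "prop:all j" for the trivial family ℂⁿ × ℂᵏ → ℂⁿ: the
twisted function t^{−ℓ⃗} f extends holomorphically to ℂⁿ × ℂᵏ if and only if, for each j,
the function t_j^{−ℓ_j} f extends holomorphically across the hyperplane {t_j = 0}. -/
theorem stmt_13 (n k : ℕ) (hn : 1 ≤ n)
    (f : ((Fin n → ℂ) × (Fin k → ℂ)) → ℂ)
    (hf : AnalyticOnNhd ℂ f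
      ({t : Fin n → ℂ | ∀ i, t i ≠ 0} ×ˢ (Set.univ : Set (Fin k → ℂ))))
    (l : Fin n → ℤ) :
    (∃ F : ((Fin n → ℂ) × (Fin k → ℂ)) → ℂ,
      AnalyticOnNhd ℂ F (Set.univ : Set ((Fin n → ℂ) × (Fin k → ℂ))) ∧
      ∀ p ∈ {t : Fin n → ℂ | ∀ i, t i ≠ 0} ×ˢ (Set.univ : Set (Fin k → ℂ)),
        F p = (∏ i, p.1 i ^ (-(l i))) * f p) ↔
    (∀ j : Fin n, ∃ F : ((Fin n → ℂ) × (Fin k → ℂ)) → ℂ,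
      AnalyticOnNhd ℂ F
        ({t : Fin n → ℂ | ∀ i, i ≠ j → t i ≠ 0} ×ˢ (Set.univ : Set (Fin k → ℂ))) ∧
      ∀ p ∈ {t : Fin n → ℂ | ∀ i, t i ≠ 0} ×ˢ (Set.univ : Set (Fin k → ℂ)),
        F p = p.1 j ^ (-(l j)) * f p) := by
  classical
  have hSall : ({t : Fin n → ℂ | ∀ i, t i ≠ 0} ×ˢ (Set.univ : Set (Fin k → ℂ))) =
      {p : (Fin n → ℂ) × (Fin k → ℂ) | ∀ i, p.1 i ≠ 0} := by
    rw [prod_univ_eq]; rfl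
  have hUjset : ∀ j : Fin n,
      ({t : Fin n → ℂ | ∀ i, i ≠ j → t i ≠ 0} ×ˢ (Set.univ : Set (Fin k → ℂ))) =
      {p : (Fin n → ℂ) × (Fin k → ℂ) | ∀ i, i ≠ j → p.1 i ≠ 0} := by
    intro j; rw [prod_univ_eq]; rfl
  rw [hSall] at hf
  constructor
  · -- forward direction
    rintro ⟨F, hF, hFeq⟩ j
    refine ⟨fun p => (∏ i ∈ Finset.univ.erase j, p.1 i ^ (l i)) * F p, ?_, ?_⟩
    · rw [hUjset j]
      intro p hp
      exact (analyticAt_prod_zpow _ l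
        (fun i hi => hp i (Finset.mem_erase.mp hi).1)).mul (hF p trivial)
    · intro p hp
      show (∏ i ∈ Finset.univ.erase j, p.1 i ^ (l i)) * F p = p.1 j ^ (-(l j)) * f p
      rw [hFeq p hp]
      rw [hSall] at hp
      have hsplit : (∏ i, p.1 i ^ (-(l i))) =
          p.1 j ^ (-(l j)) * ∏ i ∈ Finset.univ.erase j, p.1 i ^ (-(l i)) :=
        (Finset.mul_prod_erase _ _ (Finset.mem_univ j)).symm
      rw [hsplit]
      have hone : (∏ i ∈ Finset.univ.erase j, p.1 i ^ (l i)) *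
          (∏ i ∈ Finset.univ.erase j, p.1 i ^ (-(l i))) = 1 := by
        rw [← Finset.prod_mul_distrib]
        apply Finset.prod_eq_one
        intro i _
        rw [zpow_neg]
        exact mul_inv_cancel₀ (zpow_ne_zero _ (hp i))
      calc (∏ i ∈ Finset.univ.erase j, p.1 i ^ (l i)) *
            (p.1 j ^ (-(l j)) * (∏ i ∈ Finset.univ.erase j, p.1 i ^ (-(l i))) * f p)
          = ((∏ i ∈ Finset.univ.erase j, p.1 i ^ (l i)) *
            (∏ i ∈ Finset.univ.erase j, p.1 i ^ (-(l i)))) * (p.1 j ^ (-(l j)) * f p) := by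
            ring
        _ = p.1 j ^ (-(l j)) * f p := by rw [hone, one_mul]
  · -- reverse direction (the hard one)
    intro hR
    have main : ∀ m : ℕ, ∃ F : (Fin n → ℂ) × (Fin k → ℂ) → ℂ,
        AnalyticOnNhd ℂ F {p : (Fin n → ℂ) × (Fin k → ℂ) | ∀ i : Fin n, m ≤ (i : ℕ) → p.1 i ≠ 0} ∧
        ∀ p : (Fin n → ℂ) × (Fin k → ℂ), (∀ i, p.1 i ≠ 0) → F p = (∏ i, p.1 i ^ (-(l i))) * f p := by
      intro m
      induction m with
      | zero =>
          refine ⟨fun p => (∏ i, p.1 i ^ (-(l i))) * f p, ?_, fun p _ => rfl⟩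
          intro p hp
          have hp' : ∀ i, p.1 i ≠ 0 := fun i => hp i (Nat.zero_le _)
          exact (analyticAt_prod_zpow _ _ (fun i _ => hp' i)).mul (hf p hp')
      | succ m ih =>
          obtain ⟨Fm, hFm, hFmeq⟩ := ih
          by_cases hm : m < n
          · set j : Fin n := ⟨m, hm⟩ with hj
            obtain ⟨Fj, hFj, hFjeq⟩ := hR j
            rw [hUjset j] at hFj
            set S' : Fin n → Prop := fun i => m + 1 ≤ (i : ℕ) with hS'
            have hjS : ¬ S' j := by simp [hS', hj]
            set g : (Fin n → ℂ) × (Fin k → ℂ) → ℂ := fun p => if p.1 j = 0 then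
              (∏ i ∈ Finset.univ.erase j, p.1 i ^ (-(l i))) * Fj p else Fm p with hgdef
            -- g is analytic on the required union
            have hg : AnalyticOnNhd ℂ g
                (({p : (Fin n → ℂ) × (Fin k → ℂ) | ∀ i, S' i → p.1 i ≠ 0} ∩ {p : (Fin n → ℂ) × (Fin k → ℂ) | p.1 j ≠ 0}) ∪
                  {p : (Fin n → ℂ) × (Fin k → ℂ) | ∀ i, i ≠ j → p.1 i ≠ 0}) := by
              intro p hp
              rcases hp with ⟨hpΩ, hpj⟩ | hpU
              · -- p has t_j ≠ 0 : g agrees with Fm near p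
                have hpD : p ∈ {p : (Fin n → ℂ) × (Fin k → ℂ) | ∀ i : Fin n, m ≤ (i : ℕ) → p.1 i ≠ 0} := by
                  intro i hmi
                  rcases eq_or_ne i j with rfl | hij
                  · exact hpj
                  · apply hpΩ
                    have : (i : ℕ) ≠ m := fun hieq => hij (Fin.ext (by rw [hieq, hj]))
                    omega
                apply AnalyticAt.congr (hFm p hpD)
                have hopen : IsOpen {q : (Fin n → ℂ) × (Fin k → ℂ) | q.1 j ≠ 0} := by
                  have := isOpen_coords (n := n) (k := k) (fun i => i = j)
                  convert this using 1
                  ext q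
                  constructor
                  · intro hq i hij; rw [hij]; exact hq
                  · intro hq; exact hq j rfl
                filter_upwards [hopen.mem_nhds hpj] with q hq
                rw [hgdef]
                simp only [if_neg hq]
              · -- p has all other coordinates nonzero: g agrees with the twisted Fj
                have hUopen : IsOpen {p : (Fin n → ℂ) × (Fin k → ℂ) | ∀ i, i ≠ j → p.1 i ≠ 0} :=
                  isOpen_coords (fun i => i ≠ j)
                have hg₂ : AnalyticOnNhd ℂ
                    (fun p : (Fin n → ℂ) × (Fin k → ℂ) => (∏ i ∈ Finset.univ.erase j, p.1 i ^ (-(l i))) * Fj p)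
                    {p : (Fin n → ℂ) × (Fin k → ℂ) | ∀ i, i ≠ j → p.1 i ≠ 0} := by
                  intro q hq
                  exact (analyticAt_prod_zpow _ _
                    (fun i hi => hq i (Finset.mem_erase.mp hi).1)).mul (hFj q hq)
                have heq : EqOn
                    (fun p : (Fin n → ℂ) × (Fin k → ℂ) => (∏ i ∈ Finset.univ.erase j, p.1 i ^ (-(l i))) * Fj p) g
                    {p : (Fin n → ℂ) × (Fin k → ℂ) | ∀ i, i ≠ j → p.1 i ≠ 0} := by
                  intro q hq
                  rw [hgdef]
                  by_cases hqj : q.1 j = 0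
                  · simp only [if_pos hqj]
                  · simp only [if_neg hqj]
                    have hqall : ∀ i, q.1 i ≠ 0 := by
                      intro i
                      rcases eq_or_ne i j with rfl | hij
                      · exact hqj
                      · exact hq i hij
                    have h1 := hFmeq q hqall
                    have h2 := hFjeq q (by rw [hSall]; exact hqall)
                    rw [h1, h2]
                    have hsplit : (∏ i, q.1 i ^ (-(l i))) =
                        q.1 j ^ (-(l j)) * ∏ i ∈ Finset.univ.erase j, q.1 i ^ (-(l i)) :=
                      (Finset.mul_prod_erase _ _ (Finset.mem_univ j)).symm
                    rw [hsplit]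
                    ring
                exact (hg₂.congr hUopen heq) p hpU
            obtain ⟨G, hG, hGeq⟩ := core_extension j S' hjS hg
            refine ⟨G, hG, ?_⟩
            intro p hpall
            have hpmem : p ∈ ({p : (Fin n → ℂ) × (Fin k → ℂ) | ∀ i, S' i → p.1 i ≠ 0} ∩ {p : (Fin n → ℂ) × (Fin k → ℂ) | p.1 j ≠ 0}) :=
              ⟨fun i _ => hpall i, hpall j⟩
            rw [hGeq hpmem]
            rw [hgdef]
            simp only [if_neg (hpall j)]
            exact hFmeq p hpall
          · -- m ≥ n : nothing to do
            refine ⟨Fm, ?_, hFmeq⟩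
            intro p _
            apply hFm
            intro i hmi
            have := i.2
            omega
    obtain ⟨F, hF, hFeq⟩ := main n
    refine ⟨F, ?_, ?_⟩
    · intro p _
      apply hF
      intro i hni
      have := i.2
      omega
    · intro p hp
      rw [hSall] at hp
      exact hFeq p hp

end
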